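/- Let M, N, P be n × n Hermitian matrices with M = N + P. Denote the eigenvalues of M, N, P in decreasing order by μ_1 ≥ ... ≥ μ_n, ν_1 ≥ ... ≥ ν_n, and ρ_1 ≥ ... ≥ ρ_n respectively. Then for every index i, ν_i + ρ_n ≤ μ_i ≤ ν_i + ρ_1. -/

import Mathlib

open Matrix Finset Module

section WeylAux

variable {n : ℕ}

private lemma toEucl_eigen {A : Matrix (Fin n) (Fin n) ℂ} (hA : A.IsHermitian) (j : Fin n) :
    Matrix.toEuclideanLin A (hA.eigenvectorBasis j) = (hA.eigenvalues j : ℂ) • hA.eigenvectorBasis j := by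
  apply PiLp.ext
  intro k
  have := congrFun (hA.mulVec_eigenvectorBasis j) k
  rw [RCLike.real_smul_eq_coe_smul (K := ℂ)] at this
  exact this

private lemma quad_eq {ι : Type*} [Fintype ι] {F : Type*} [NormedAddCommGroup F]
    [InnerProductSpace ℂ F] (T : F →ₗ[ℂ] F)
    (g : ι → F) (hg : Orthonormal ℂ g) (lam : ι → ℝ)
    (hT : ∀ i, T (g i) = (lam i : ℂ) • g i) (a : ι → ℂ) :
    (inner ℂ (∑ i, a i • g i) (T (∑ i, a i • g i)) : ℂ).re = ∑ i, lam i * ‖a i‖ ^ 2 ∧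
    ‖∑ i, a i • g i‖ ^ 2 = ∑ i, ‖a i‖ ^ 2 := by
  have hTx : T (∑ i, a i • g i) = ∑ i, (a i * (lam i : ℂ)) • g i := by
    rw [map_sum]
    exact Finset.sum_congr rfl fun i _ => by rw [_root_.map_smul, hT i, smul_smul]
  constructor
  · rw [hTx, hg.inner_sum, Complex.re_sum]
    refine Finset.sum_congr rfl fun j _ => ?_
    rw [show (starRingEnd ℂ) (a j) * (a j * (lam j:ℂ)) = ((starRingEnd ℂ) (a j) * a j) * (lam j:ℂ) from by ring,
      RCLike.conj_mul]
    simp [mul_comm, ← Complex.ofReal_pow]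
  · have h := hg.inner_sum a a Finset.univ
    rw [norm_sq_eq_re_inner (𝕜 := ℂ)]
    simp only [RCLike.re_to_complex]
    rw [h, Complex.re_sum]
    exact Finset.sum_congr rfl fun j _ => by
      rw [RCLike.conj_mul]; simp [← Complex.ofReal_pow]

private lemma quad_le {ι : Type*} [Fintype ι] {F : Type*} [NormedAddCommGroup F]
    [InnerProductSpace ℂ F] (T : F →ₗ[ℂ] F)
    (g : ι → F) (hg : Orthonormal ℂ g) (lam : ι → ℝ)
    (hT : ∀ i, T (g i) = (lam i : ℂ) • g i) (c : ℝ) (hc : ∀ i, lam i ≤ c)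
    (x : F) (hx : x ∈ Submodule.span ℂ (Set.range g)) :
    (inner ℂ x (T x) : ℂ).re ≤ c * ‖x‖ ^ 2 := by
  obtain ⟨a, rfl⟩ := Submodule.mem_span_range_iff_exists_fun ℂ |>.mp hx
  obtain ⟨h1, h2⟩ := quad_eq T g hg lam hT a
  rw [h1, h2, Finset.mul_sum]
  exact Finset.sum_le_sum fun j _ => mul_le_mul_of_nonneg_right (hc j) (by positivity)

private lemma quad_ge {ι : Type*} [Fintype ι] {F : Type*} [NormedAddCommGroup F]
    [InnerProductSpace ℂ F] (T : F →ₗ[ℂ] F)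
    (g : ι → F) (hg : Orthonormal ℂ g) (lam : ι → ℝ)
    (hT : ∀ i, T (g i) = (lam i : ℂ) • g i) (c : ℝ) (hc : ∀ i, c ≤ lam i)
    (x : F) (hx : x ∈ Submodule.span ℂ (Set.range g)) :
    c * ‖x‖ ^ 2 ≤ (inner ℂ x (T x) : ℂ).re := by
  obtain ⟨a, rfl⟩ := Submodule.mem_span_range_iff_exists_fun ℂ |>.mp hx
  obtain ⟨h1, h2⟩ := quad_eq T g hg lam hT a
  rw [h1, h2, Finset.mul_sum]
  exact Finset.sum_le_sum fun j _ => mul_le_mul_of_nonneg_right (hc j) (by positivity)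

/-- the family of eigenvectors indexed by a finset, through a permutation -/
private noncomputable def efam {A : Matrix (Fin n) (Fin n) ℂ} (hA : A.IsHermitian) (e : Equiv.Perm (Fin n))
    (s : Finset (Fin n)) : ↥s → EuclideanSpace ℂ (Fin n) :=
  fun j => hA.eigenvectorBasis (e ↑j)

private lemma efam_ortho {A : Matrix (Fin n) (Fin n) ℂ} (hA : A.IsHermitian)
    (e : Equiv.Perm (Fin n)) (s : Finset (Fin n)) : Orthonormal ℂ (efam hA e s) :=
  hA.eigenvectorBasis.orthonormal.comp _ (e.injective.comp Subtype.val_injective)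

private lemma efam_eigen {A : Matrix (Fin n) (Fin n) ℂ} (hA : A.IsHermitian)
    (e : Equiv.Perm (Fin n)) (s : Finset (Fin n)) (α : Fin n → ℝ)
    (hα : α = hA.eigenvalues ∘ e) (j : ↥s) :
    Matrix.toEuclideanLin A (efam hA e s j) = ((α ↑j : ℝ) : ℂ) • efam hA e s j := by
  rw [hα]; exact toEucl_eigen hA (e ↑j)

private lemma efam_span_rank {A : Matrix (Fin n) (Fin n) ℂ} (hA : A.IsHermitian)
    (e : Equiv.Perm (Fin n)) (s : Finset (Fin n)) :
    finrank ℂ (Submodule.span ℂ (Set.range (efam hA e s))) = s.card := by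
  rw [finrank_span_eq_card (efam_ortho hA e s).linearIndependent, Fintype.card_coe]

private lemma efam_span_top {A : Matrix (Fin n) (Fin n) ℂ} (hA : A.IsHermitian)
    (e : Equiv.Perm (Fin n)) :
    Submodule.span ℂ (Set.range (efam hA e (univ : Finset (Fin n)))) = ⊤ := by
  have hr : Set.range (efam hA e (univ : Finset (Fin n))) = Set.range hA.eigenvectorBasis := by
    ext y; constructor
    · rintro ⟨j, rfl⟩; exact ⟨e ↑j, rfl⟩
    · rintro ⟨j, rfl⟩; exact ⟨⟨e.symm j, Finset.mem_univ _⟩, by simp [efam]⟩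
  rw [hr, ← hA.eigenvectorBasis.coe_toBasis, Basis.span_eq]

private lemma exists_ne_zero_mem_inf {F : Type*} [NormedAddCommGroup F] [InnerProductSpace ℂ F]
    [FiniteDimensional ℂ F] (U V : Submodule ℂ F)
    (h : finrank ℂ F < finrank ℂ U + finrank ℂ V) : ∃ x, x ∈ U ∧ x ∈ V ∧ x ≠ 0 := by
  have hUV : U ⊓ V ≠ ⊥ := by
    intro hbot
    have h1 := Submodule.finrank_sup_add_finrank_inf_eq U V
    rw [hbot, finrank_bot, add_zero] at h1
    have h2 := Submodule.finrank_le (U ⊔ V)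
    omega
  obtain ⟨x, hx, hx0⟩ := Submodule.exists_mem_ne_zero_of_ne_bot hUV
  exact ⟨x, hx.1, hx.2, hx0⟩

end WeylAux

/-- Weyl's inequality: for Hermitian `n × n` matrices `M = N + P` with eigenvalues
listed in decreasing order `μ`, `ν`, `ρ` respectively, for every index `i`,
`ν_i + ρ_n ≤ μ_i ≤ ν_i + ρ_1`. -/
theorem stmt6 (n : ℕ) (hn : 0 < n) (M N P : Matrix (Fin n) (Fin n) ℂ)
    (hMNP : M = N + P)
    (hM : M.IsHermitian) (hN : N.IsHermitian) (hP : P.IsHermitian)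
    (μ ν ρ : Fin n → ℝ)
    (eμ eν eρ : Equiv.Perm (Fin n))
    (hμ : μ = hM.eigenvalues ∘ eμ) (hν : ν = hN.eigenvalues ∘ eν)
    (hρ : ρ = hP.eigenvalues ∘ eρ)
    (hμa : Antitone μ) (hνa : Antitone ν) (hρa : Antitone ρ) :
    ∀ i : Fin n, ν i + ρ ⟨n - 1, by omega⟩ ≤ μ i ∧ μ i ≤ ν i + ρ ⟨0, hn⟩ := by
  intro i
  have hsplit : ∀ x : EuclideanSpace ℂ (Fin n),
      (inner ℂ x (Matrix.toEuclideanLin M x) : ℂ).re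
        = (inner ℂ x (Matrix.toEuclideanLin N x) : ℂ).re
          + (inner ℂ x (Matrix.toEuclideanLin P x) : ℂ).re := by
    intro x
    rw [hMNP, map_add, LinearMap.add_apply, inner_add_right]
    simp
  -- global bounds for P
  have hPle : ∀ x : EuclideanSpace ℂ (Fin n),
      (inner ℂ x (Matrix.toEuclideanLin P x) : ℂ).re ≤ ρ ⟨0, hn⟩ * ‖x‖ ^ 2 := by
    intro x
    refine quad_le _ _ (efam_ortho hP eρ univ) (fun j => ρ ↑j) (efam_eigen hP eρ univ ρ hρ)
      _ (fun j => hρa (Fin.le_def.mpr (by simp))) x (by rw [efam_span_top hP eρ]; trivial)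
  have hPge : ∀ x : EuclideanSpace ℂ (Fin n),
      ρ ⟨n - 1, by omega⟩ * ‖x‖ ^ 2 ≤ (inner ℂ x (Matrix.toEuclideanLin P x) : ℂ).re := by
    intro x
    refine quad_ge _ _ (efam_ortho hP eρ univ) (fun j => ρ ↑j) (efam_eigen hP eρ univ ρ hρ)
      _ (fun j => hρa (Fin.le_def.mpr (by have := (↑j : Fin n).isLt; simp; omega))) x
      (by rw [efam_span_top hP eρ]; trivial)
  constructor
  · -- lower bound : ν i + ρ_min ≤ μ i
    obtain ⟨x, hxU, hxV, hx0⟩ := exists_ne_zero_mem_inf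
      (Submodule.span ℂ (Set.range (efam hM eμ (Ici i))))
      (Submodule.span ℂ (Set.range (efam hN eν (Iic i))))
      (by rw [efam_span_rank, efam_span_rank, Fin.card_Ici, Fin.card_Iic, finrank_euclideanSpace,
        Fintype.card_fin]; omega)
    have hxn : (0:ℝ) < ‖x‖ ^ 2 := pow_pos (norm_pos_iff.mpr hx0) 2
    have hMle : (inner ℂ x (Matrix.toEuclideanLin M x) : ℂ).re ≤ μ i * ‖x‖ ^ 2 :=
      quad_le _ _ (efam_ortho hM eμ (Ici i)) (fun j => μ ↑j) (efam_eigen hM eμ (Ici i) μ hμ)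
        _ (fun j => hμa (Finset.mem_Ici.mp j.2)) x hxU
    have hNge : ν i * ‖x‖ ^ 2 ≤ (inner ℂ x (Matrix.toEuclideanLin N x) : ℂ).re :=
      quad_ge _ _ (efam_ortho hN eν (Iic i)) (fun j => ν ↑j) (efam_eigen hN eν (Iic i) ν hν)
        _ (fun j => hνa (Finset.mem_Iic.mp j.2)) x hxV
    have := hsplit x
    have := hPge x
    nlinarith [hxn]
  · -- upper bound : μ i ≤ ν i + ρ_max
    obtain ⟨x, hxU, hxV, hx0⟩ := exists_ne_zero_mem_inf
      (Submodule.span ℂ (Set.range (efam hM eμ (Iic i))))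
      (Submodule.span ℂ (Set.range (efam hN eν (Ici i))))
      (by rw [efam_span_rank, efam_span_rank, Fin.card_Ici, Fin.card_Iic, finrank_euclideanSpace,
        Fintype.card_fin]; omega)
    have hxn : (0:ℝ) < ‖x‖ ^ 2 := pow_pos (norm_pos_iff.mpr hx0) 2
    have hMge : μ i * ‖x‖ ^ 2 ≤ (inner ℂ x (Matrix.toEuclideanLin M x) : ℂ).re :=
      quad_ge _ _ (efam_ortho hM eμ (Iic i)) (fun j => μ ↑j) (efam_eigen hM eμ (Iic i) μ hμ)
        _ (fun j => hμa (Finset.mem_Iic.mp j.2)) x hxU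
    have hNle : (inner ℂ x (Matrix.toEuclideanLin N x) : ℂ).re ≤ ν i * ‖x‖ ^ 2 :=
      quad_le _ _ (efam_ortho hN eν (Ici i)) (fun j => ν ↑j) (efam_eigen hN eν (Ici i) ν hν)
        _ (fun j => hνa (Finset.mem_Ici.mp j.2)) x hxV
    have := hsplit x
    have := hPle x
    nlinarith [hxn]
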